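/- Let Ω be a set, Ω* the free monoid on Ω, H ⊆ Ω*×Ω* a finite symmetric set, ρ = ⟨H⟩, and a ∈ Ω*. Set K = max{|p| : (p,q) ∈ H}, K' = max(K, |a|) + 1, L = 2|H| + 2, and N = K'L. Then the right congruence r(aρ) = {(u,v) ∈ Ω*×Ω* : (au, av) ∈ ρ} is generated (as a right congruence on Ω*) by the finite set X = {(u,v) : |u| + |v| ≤ 3N and (au, av) ∈ ρ}. In particular, r(aρ) is a finitely generated right congruence. -/

import Mathlib

/-- A right congruence on a monoid `S`: an equivalence relation compatible with
right multiplication. -/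
def IsRightCong {S : Type*} [Monoid S] (ρ : Set (S × S)) : Prop :=
  Equivalence (fun a b : S => (a, b) ∈ ρ) ∧ ∀ u v t : S, (u, v) ∈ ρ → (u * t, v * t) ∈ ρ

/-- The right congruence generated by a set `H` of pairs: the smallest right
congruence containing `H`. -/
def rcGen {S : Type*} [Monoid S] (H : Set (S × S)) : Set (S × S) :=
  ⋂₀ {ρ : Set (S × S) | IsRightCong ρ ∧ H ⊆ ρ}

namespace Anni

lemma isRightCong_rcGen {S : Type*} [Monoid S] (H : Set (S × S)) : IsRightCong (rcGen H) := by
  constructor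
  · constructor
    · intro x ρ hρ
      exact hρ.1.1.refl x
    · intro x y hxy ρ hρ
      exact hρ.1.1.symm (hxy ρ hρ)
    · intro x y z hxy hyz ρ hρ
      exact hρ.1.1.trans (hxy ρ hρ) (hyz ρ hρ)
  · intro u v t huv ρ hρ
    exact hρ.1.2 u v t (huv ρ hρ)

lemma subset_rcGen {S : Type*} [Monoid S] (H : Set (S × S)) : H ⊆ rcGen H := by
  intro x hx ρ hρ
  exact hρ.2 hx

lemma rcGen_subset {S : Type*} [Monoid S] {H ρ : Set (S × S)} (h1 : IsRightCong ρ)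
    (h2 : H ⊆ ρ) : rcGen H ⊆ ρ :=
  Set.sInter_subset_of_mem ⟨h1, h2⟩

variable {Ω : Type*}

open FreeMonoid

lemma exists_split (w : FreeMonoid Ω) (k : ℕ) (hk : k ≤ w.length) :
    ∃ y s : FreeMonoid Ω, w = y * s ∧ s.length = k := by
  refine ⟨ofList ((toList w).take (w.length - k)), ofList ((toList w).drop (w.length - k)), ?_, ?_⟩
  · rw [← ofList_append, List.take_append_drop, ofList_toList]
  · show ((toList w).drop (w.length - k)).length = k
    have hw : w.length = (toList w).length := rfl
    rw [List.length_drop]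
    omega

lemma split_agree {y s p t : FreeMonoid Ω} (h : y * s = p * t) (hl : s.length ≤ t.length) :
    ∃ t₀ : FreeMonoid Ω, t = t₀ * s ∧ y = p * t₀ := by
  have h' : toList y ++ toList s = toList p ++ toList t := by
    rw [← toList_mul, ← toList_mul, h]
  rcases List.append_eq_append_iff.1 h' with ⟨a', ha1, ha2⟩ | ⟨c', hc1, hc2⟩
  · have : a'.length = 0 := by
      have := congrArg List.length ha2
      simp only [List.length_append] at this
      have ht : t.length = (toList t).length := rfl
      have hs : s.length = (toList s).length := rfl
      omega
    rw [List.length_eq_zero_iff] at this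
    subst this
    simp only [List.append_nil, List.nil_append] at ha1 ha2
    refine ⟨1, ?_, ?_⟩
    · rw [one_mul]; exact toList.injective ha2.symm
    · rw [mul_one]; exact toList.injective ha1.symm
  · refine ⟨ofList c', ?_, ?_⟩
    · apply toList.injective; simpa using hc2
    · apply toList.injective; simpa using hc1

/-- A variant of `split_agree` producing equality when the suffix lengths agree. -/
lemma split_agree_eq {y s p t : FreeMonoid Ω} (h : y * s = p * t) (hl : s.length = t.length) :
    t = s ∧ y = p := by
  obtain ⟨d, hd1, hd2⟩ := split_agree h hl.le
  have : d.length = 0 := by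
    have := congrArg FreeMonoid.length hd1
    simp only [length_mul] at this
    omega
  rw [FreeMonoid.length_eq_zero] at this
  subst this
  rw [one_mul] at hd1
  rw [mul_one] at hd2
  exact ⟨hd1, hd2⟩

def Step (H : Set (FreeMonoid Ω × FreeMonoid Ω)) (w w' : FreeMonoid Ω) : Prop :=
  ∃ p q t, (p, q) ∈ H ∧ w = p * t ∧ w' = q * t

def Rho (H : Set (FreeMonoid Ω × FreeMonoid Ω)) : FreeMonoid Ω → FreeMonoid Ω → Prop :=
  Relation.ReflTransGen (Step H)

variable {H : Set (FreeMonoid Ω × FreeMonoid Ω)}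

lemma Step.mulRight {w w' t : FreeMonoid Ω} (h : Step H w w') : Step H (w * t) (w' * t) := by
  obtain ⟨p, q, s, hpq, rfl, rfl⟩ := h
  exact ⟨p, q, s * t, hpq, by rw [mul_assoc], by rw [mul_assoc]⟩

lemma Rho.mulRight {w w' t : FreeMonoid Ω} (h : Rho H w w') : Rho H (w * t) (w' * t) :=
  Relation.ReflTransGen.lift (· * t) (fun _ _ (hs : Step H _ _) => hs.mulRight) _ _ h

lemma rho_symm (hsym : ∀ p : FreeMonoid Ω × FreeMonoid Ω, p ∈ H → (p.2, p.1) ∈ H) :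
    Symmetric (Rho H) :=
  fun x y h => (@Relation.ReflTransGen.stdSymm _ (Step H) ⟨fun _ _ ⟨p, q, t, hpq, h1, h2⟩ =>
    ⟨q, p, t, hsym _ hpq, h2, h1⟩⟩).symm x y h

lemma isRightCong_rho (hsym : ∀ p : FreeMonoid Ω × FreeMonoid Ω, p ∈ H → (p.2, p.1) ∈ H) :
    IsRightCong {p : FreeMonoid Ω × FreeMonoid Ω | Rho H p.1 p.2} :=
  ⟨⟨fun _ => Relation.ReflTransGen.refl, fun h => rho_symm hsym h,
    fun h1 h2 => h1.trans h2⟩, fun _ _ _ h => h.mulRight⟩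

lemma rcGen_eq_rho (hsym : ∀ p : FreeMonoid Ω × FreeMonoid Ω, p ∈ H → (p.2, p.1) ∈ H) :
    rcGen H = {p : FreeMonoid Ω × FreeMonoid Ω | Rho H p.1 p.2} := by
  apply subset_antisymm
  · apply rcGen_subset (isRightCong_rho hsym)
    intro ⟨p, q⟩ hpq
    exact Relation.ReflTransGen.single ⟨p, q, 1, hpq, (mul_one p).symm, (mul_one q).symm⟩
  · rintro ⟨w, w'⟩ (h : Rho H w w')
    induction h with
    | refl => exact (isRightCong_rcGen H).1.refl w
    | tail _ hstep ih =>
      obtain ⟨p, q, t, hpq, rfl, rfl⟩ := hstep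
      exact (isRightCong_rcGen H).1.trans ih
        ((isRightCong_rcGen H).2 p q t (subset_rcGen H hpq))

lemma probe {w w₂ : FreeMonoid Ω} (h : Rho H w w₂) :
    ∀ n, n ≤ w.length →
    (∃ y z s : FreeMonoid Ω, s.length = n ∧ w = y * s ∧ w₂ = z * s ∧ Rho H y z) ∨
    (∃ p q y t : FreeMonoid Ω, (p, q) ∈ H ∧ w = y * t ∧ t.length < n ∧
      n ≤ t.length + p.length ∧ Rho H y p ∧ Rho H (q * t) w₂) := by
  induction h using Relation.ReflTransGen.head_induction_on with
  | refl =>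
    intro n hn
    obtain ⟨y, s, rfl, hs⟩ := exists_split w₂ n hn
    exact Or.inl ⟨y, y, s, hs, rfl, rfl, Relation.ReflTransGen.refl⟩
  | @head w c hstep htail ih =>
    intro n hn
    obtain ⟨p, q, t, hpq, rfl, rfl⟩ := hstep
    by_cases hc : n ≤ t.length
    · obtain ⟨t₀, s, rfl, hs⟩ := exists_split t n hc
      have hlen : n ≤ (q * (t₀ * s)).length := by
        simp only [length_mul]; omega
      rcases ih n hlen with ⟨y', z, s', hs', hceq, hw2, hyz⟩ |
          ⟨p₁, q₁, y₁, t₁, hpq₁, hceq, ht₁, hb, hy₁, hq₁⟩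
      · have hceq' : (q * t₀) * s = y' * s' := by rw [mul_assoc]; exact hceq
        obtain ⟨hd1, hd2⟩ := split_agree_eq hceq' (by omega)
        rw [hd1] at hw2
        refine Or.inl ⟨p * t₀, z, s, hs, by rw [mul_assoc], hw2, ?_⟩
        exact Relation.ReflTransGen.head ⟨p, q, t₀, hpq, rfl, rfl⟩ (hd2 ▸ hyz)
      · have ht₁t : t₁.length ≤ (t₀ * s).length := by
          simp only [length_mul]; omega
        obtain ⟨d, hd1, hd2⟩ := split_agree hceq.symm ht₁t
        refine Or.inr ⟨p₁, q₁, p * d, t₁, hpq₁, by rw [mul_assoc, ← hd1], ht₁, hb, ?_, hq₁⟩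
        exact Relation.ReflTransGen.head ⟨p, q, d, hpq, rfl, rfl⟩ (hd2 ▸ hy₁)
    · push_neg at hc
      refine Or.inr ⟨p, q, p, t, hpq, rfl, hc, ?_, Relation.ReflTransGen.refl, htail⟩
      have : (p * t).length = p.length + t.length := length_mul p t
      omega

lemma fresh {A : Set Ω}
    (hA : ∀ pq ∈ H, (∀ c ∈ toList pq.1, c ∈ A) ∧ (∀ c ∈ toList pq.2, c ∈ A))
    {w w₂ : FreeMonoid Ω} (h : Rho H w w₂) :
    ∀ y s : FreeMonoid Ω, w = y * s → (∀ c ∈ toList y, c ∈ A) →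
      (∀ hd tl, toList s = hd :: tl → hd ∉ A) →
      ∃ z, w₂ = z * s ∧ (∀ c ∈ toList z, c ∈ A) ∧ Rho H y z := by
  induction h using Relation.ReflTransGen.head_induction_on with
  | refl =>
    intro y s hw hy _
    exact ⟨y, hw, hy, Relation.ReflTransGen.refl⟩
  | @head w c hstep htail ih =>
    intro y s hw hy hbad
    obtain ⟨p, q, t, hpq, hw', rfl⟩ := hstep
    have hst : s.length ≤ t.length := by
      by_contra hlt
      push_neg at hlt
      obtain ⟨d, hd1, hd2⟩ := split_agree (hw ▸ hw' : y * s = p * t).symm hlt.le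
      have hdne : toList d ≠ [] := by
        intro hnil
        have : d.length = 0 := congrArg List.length hnil
        have h1 := congrArg FreeMonoid.length hd1
        simp only [length_mul] at h1
        omega
      obtain ⟨hd, tl, hdt⟩ := List.exists_cons_of_ne_nil hdne
      have hsl : toList s = hd :: (tl ++ toList t) := by
        rw [hd1, toList_mul, hdt]; rfl
      have hmem : hd ∈ toList p := by
        rw [hd2, toList_mul, hdt]
        simp
      exact hbad hd _ hsl ((hA _ hpq).1 hd hmem)
    obtain ⟨t₀, ht1, ht2⟩ := split_agree (hw ▸ hw' : y * s = p * t).symm.symm hst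
    have hc : q * t = (q * t₀) * s := by rw [ht1, mul_assoc]
    have hqt : ∀ x ∈ toList (q * t₀), x ∈ A := by
      intro x hx
      rw [toList_mul, List.mem_append] at hx
      rcases hx with hx | hx
      · exact (hA _ hpq).2 x hx
      · apply hy
        rw [ht2, toList_mul, List.mem_append]
        exact Or.inr hx
    obtain ⟨z, hz1, hz2, hz3⟩ := ih (q * t₀) s hc hqt hbad
    exact ⟨z, hz1, hz2, Relation.ReflTransGen.head ⟨p, q, t₀, hpq, ht2, rfl⟩ hz3⟩

lemma first_bad (A : Set Ω) :
    ∀ l : List Ω, (∃ c ∈ l, c ∉ A) →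
      ∃ (l₁ : List Ω) (c : Ω) (l₂ : List Ω), l = l₁ ++ c :: l₂ ∧ (∀ x ∈ l₁, x ∈ A) ∧ c ∉ A := by
  intro l
  induction l with
  | nil => rintro ⟨c, hc, -⟩; cases hc
  | cons x xs ih =>
    intro hbad
    by_cases hx : x ∈ A
    · have : ∃ c ∈ xs, c ∉ A := by
        obtain ⟨c, hc1, hc2⟩ := hbad
        rcases List.mem_cons.1 hc1 with rfl | hc1
        · exact absurd hx hc2
        · exact ⟨c, hc1, hc2⟩
      obtain ⟨l₁, c, l₂, h1, h2, h3⟩ := ih this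
      refine ⟨x :: l₁, c, l₂, by rw [h1]; rfl, ?_, h3⟩
      intro y hy
      rcases List.mem_cons.1 hy with rfl | hy
      · exact hx
      · exact h2 y hy
    · exact ⟨[], x, xs, rfl, by simp, hx⟩

/-- The main induction: every pair of `r(a\u03c1)` lies in the right congruence generated
by the pairs of `r(a\u03c1)` of total length at most `3N`. -/
lemma generated (hsym : ∀ p : FreeMonoid Ω × FreeMonoid Ω, p ∈ H → (p.2, p.1) ∈ H)
    (hfin : H.Finite) (a : FreeMonoid Ω) {K K' L N : ℕ}
    (hKb : ∀ p q : FreeMonoid Ω, (p, q) ∈ H → p.length ≤ K)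
    (hK' : K' = max K a.length + 1)
    (hL : L = 2 * H.ncard + 2)
    (hN : N = K' * L) :
    ∀ n : ℕ, ∀ u v : FreeMonoid Ω, u.length + v.length = n →
      Rho H (a * u) (a * v) →
      (u, v) ∈ rcGen {p : FreeMonoid Ω × FreeMonoid Ω |
        p.1.length + p.2.length ≤ 3 * N ∧ Rho H (a * p.1) (a * p.2)} := by
  classical
  set X : Set (FreeMonoid Ω × FreeMonoid Ω) :=
    {p | p.1.length + p.2.length ≤ 3 * N ∧ Rho H (a * p.1) (a * p.2)} with hXdef
  have cX := isRightCong_rcGen X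
  have hK'a : a.length + 1 ≤ K' := by
    have := le_max_right K a.length; omega
  have hKK' : K + 1 ≤ K' := by
    have := le_max_left K a.length; omega
  have hL2 : 2 ≤ L := by omega
  have hN2 : 2 ≤ N := by
    have : 1 * 2 ≤ K' * L := Nat.mul_le_mul (by omega) hL2
    omega
  have hLK : (L - 1) * K' + K' = N := by
    have hL1 : (L - 1) + 1 = L := by omega
    calc (L - 1) * K' + K' = ((L - 1) + 1) * K' := by ring
    _ = L * K' := by rw [hL1]
    _ = N := by rw [hN, mul_comm]
  intro n
  induction n using Nat.strong_induction_on with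
  | _ n IH =>
  have core : ∀ u v : FreeMonoid Ω, u.length + v.length = n → Rho H (a * u) (a * v) →
      3 * N < u.length + v.length → v.length ≤ u.length → (u, v) ∈ rcGen X := by
    intro u v hn hr h3 hvu
    obtain ⟨m, hm⟩ : ∃ m, u.length = m + N := ⟨u.length - N, by omega⟩
    have hm1 : 1 ≤ m := by omega
    by_cases hA : ∃ r, 1 ≤ r ∧ r ≤ L - 1 ∧
        ∃ y z s : FreeMonoid Ω, s.length = m + r * K' ∧ a * u = y * s ∧ a * v = z * s ∧
          Rho H y z
    · -- Case A : some probed suffix survives; strip a common suffix.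
      obtain ⟨r, hr1, hr2, y, z, s, hs, hu, hv, hyz⟩ := hA
      have hrK : r * K' ≤ (L - 1) * K' := Nat.mul_le_mul_right _ hr2
      have hK'r : K' ≤ r * K' := by
        calc K' = 1 * K' := (one_mul _).symm
        _ ≤ r * K' := Nat.mul_le_mul_right _ hr1
      have hnu : m + r * K' + K' ≤ u.length := by omega
      have hlav : (a * v).length = a.length + v.length := length_mul a v
      have hlav2 : (a * v).length = z.length + s.length := by rw [hv]; exact length_mul z s
      have hv1 : 1 ≤ v.length := by omega
      set ℓ := min (m + r * K') v.length with hℓ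
      have hℓ1 : 1 ≤ ℓ := by omega
      have hℓs : ℓ ≤ s.length := by omega
      have hℓu : ℓ ≤ u.length := by omega
      have hℓv : ℓ ≤ v.length := by omega
      obtain ⟨s₀, s₁, hss, hs₁⟩ := exists_split s ℓ hℓs
      obtain ⟨u₁, su, hu₁, hsu⟩ := exists_split u ℓ hℓu
      obtain ⟨v₁, sv, hv₁, hsv⟩ := exists_split v ℓ hℓv
      have e1 : (a * u₁) * su = (y * s₀) * s₁ := by
        rw [mul_assoc, ← hu₁, hu, hss, ← mul_assoc]
      have e2 : (a * v₁) * sv = (z * s₀) * s₁ := by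
        rw [mul_assoc, ← hv₁, hv, hss, ← mul_assoc]
      obtain ⟨hq1, hq2⟩ := split_agree_eq e1 (by omega)
      obtain ⟨hq1', hq2'⟩ := split_agree_eq e2 (by omega)
      have hru₁v₁ : Rho H (a * u₁) (a * v₁) := by
        rw [hq2, hq2']
        exact hyz.mulRight
      have hul : u.length = u₁.length + ℓ := by
        rw [hu₁, length_mul, hsu]
      have hvl : v.length = v₁.length + ℓ := by
        rw [hv₁, length_mul, hsv]
      have hmem₁ : (u₁, v₁) ∈ rcGen X :=
        IH (u₁.length + v₁.length) (by omega) u₁ v₁ rfl hru₁v₁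
      have : (u₁ * s₁, v₁ * s₁) ∈ rcGen X := cX.2 u₁ v₁ s₁ hmem₁
      rw [hu₁, hv₁, ← hq1, ← hq1']
      exact this
    · -- Case B : all probes give drops below the probed level; pigeonhole.
      have hBB : ∀ r ∈ Finset.Icc 1 (L - 1), ∃ p q y t : FreeMonoid Ω,
          (p, q) ∈ H ∧ a * u = y * t ∧ t.length < m + r * K' ∧
          m + r * K' ≤ t.length + p.length ∧ Rho H y p ∧ Rho H (q * t) (a * v) := by
        intro r hrI
        rw [Finset.mem_Icc] at hrI
        have hrK : r * K' ≤ (L - 1) * K' := Nat.mul_le_mul_right _ hrI.2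
        have hrlen : m + r * K' ≤ (a * u).length := by
          rw [length_mul]; omega
        rcases probe hr _ hrlen with hl | hrt
        · exact absurd ⟨r, hrI.1, hrI.2, hl⟩ hA
        · exact hrt
      choose P Q Y T hmem hdec hltp hgep hYP hQv using hBB
      set g : ℕ → FreeMonoid Ω × FreeMonoid Ω := fun r =>
        if h : r ∈ Finset.Icc 1 (L - 1) then (P r h, Q r h) else (1, 1) with hg
      have hcard : hfin.toFinset.card < (Finset.Icc 1 (L - 1)).card := by
        have hHc : H.ncard = hfin.toFinset.card := Set.ncard_eq_toFinset_card H hfin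
        rw [Nat.card_Icc]
        omega
      have hmaps : ∀ r ∈ Finset.Icc 1 (L - 1), g r ∈ hfin.toFinset := by
        intro r hrI
        simp only [hg, dif_pos hrI]
        exact (Set.Finite.mem_toFinset hfin).2 (hmem r hrI)
      obtain ⟨i, hiI, j, hjI, hij, hgij⟩ :=
        Finset.exists_ne_map_eq_of_card_lt_of_maps_to hcard hmaps
      have key : ∀ i j (hiI : i ∈ Finset.Icc 1 (L - 1)) (hjI : j ∈ Finset.Icc 1 (L - 1)),
          i < j → g i = g j → (u, v) ∈ rcGen X := by
        clear hij hgij hiI hjI i j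
        intro i j hiI hjI hij hgij
        have hgi : g i = (P i hiI, Q i hiI) := dif_pos hiI
        have hgj : g j = (P j hjI, Q j hjI) := dif_pos hjI
        rw [hgi, hgj, Prod.mk.injEq] at hgij
        obtain ⟨hPij, hQij⟩ := hgij
        obtain ⟨hi1, hi2⟩ := Finset.mem_Icc.1 hiI
        obtain ⟨hj1, hj2⟩ := Finset.mem_Icc.1 hjI
        have hdeci := hdec i hiI
        have hdecj := hdec j hjI
        have hlti := hltp i hiI
        have hltj := hltp j hjI
        have hgei := hgep i hiI
        have hgej := hgep j hjI
        have hPiK : (P i hiI).length ≤ K := hKb _ _ (hmem i hiI)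
        have hPjK : (P j hjI).length ≤ K := hKb _ _ (hmem j hjI)
        have hiK : K' ≤ i * K' := by
          calc K' = 1 * K' := (one_mul _).symm
          _ ≤ i * K' := Nat.mul_le_mul_right _ hi1
        have hijK : i * K' + K' ≤ j * K' := by
          have h1 : (i + 1) * K' ≤ j * K' := Nat.mul_le_mul_right _ (by omega)
          calc i * K' + K' = (i + 1) * K' := by ring
          _ ≤ j * K' := h1
        have hjK2 : j * K' ≤ (L - 1) * K' := Nat.mul_le_mul_right _ hj2
        have htilt : (T i hiI).length < (T j hjI).length := by omega
        have htju : (T j hjI).length ≤ u.length := by omega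
        have htiu : (T i hiI).length ≤ u.length := by omega
        obtain ⟨xi, si, hxi, hsi⟩ := exists_split u (T i hiI).length htiu
        obtain ⟨xj, sj, hxj, hsj⟩ := exists_split u (T j hjI).length htju
        have ei : (a * xi) * si = Y i hiI * T i hiI := by rw [mul_assoc, ← hxi, hdeci]
        have ej : (a * xj) * sj = Y j hjI * T j hjI := by rw [mul_assoc, ← hxj, hdecj]
        obtain ⟨hti_si, hYi⟩ := split_agree_eq ei (by omega)
        obtain ⟨htj_sj, hYj⟩ := split_agree_eq ej (by omega)
        rw [← hti_si] at hxi
        rw [← htj_sj] at hxj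
        have hxil : u.length = xi.length + (T i hiI).length := by rw [hxi, length_mul]
        have hxjl : u.length = xj.length + (T j hjI).length := by rw [hxj, length_mul]
        have hYjPi : Rho H (Y j hjI) (P i hiI) := by
          rw [hPij]; exact hYP j hjI
        have hpair : (xi, xj) ∈ X := by
          refine ⟨?_, ?_⟩
          · show xi.length + xj.length ≤ 3 * N
            omega
          · show Rho H (a * xi) (a * xj)
            rw [hYi, hYj]
            exact (hYP i hiI).trans (rho_symm hsym hYjPi)
        have step1 : (u, xj * T i hiI) ∈ rcGen X := by
          rw [hxi]
          exact cX.2 xi xj _ (subset_rcGen X hpair)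
        have hru2 : Rho H (a * (xj * T i hiI)) (a * v) := by
          rw [← mul_assoc, hYj]
          refine Relation.ReflTransGen.trans (hYjPi.mulRight) ?_
          exact Relation.ReflTransGen.head
            ⟨P i hiI, Q i hiI, T i hiI, hmem i hiI, rfl, rfl⟩ (hQv i hiI)
        have hlast : (xj * T i hiI).length + v.length < n := by
          rw [length_mul]; omega
        have hfinmem : (xj * T i hiI, v) ∈ rcGen X := IH _ hlast _ v rfl hru2
        exact cX.1.trans step1 hfinmem
      rcases lt_or_gt_of_ne hij with h | h
      · exact key i j hiI hjI h hgij
      · exact key j i hjI hiI h hgij.symm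
  intro u v hn hr
  by_cases h3 : u.length + v.length ≤ 3 * N
  · exact subset_rcGen X ⟨h3, hr⟩
  push_neg at h3
  rcases le_total v.length u.length with hvu | huv
  · exact core u v hn hr h3 hvu
  · exact cX.1.symm (core v u (by omega) (rho_symm hsym hr) (by omega) huv)

/-- Every pair of the bounded generating set is generated by pairs whose letters all
come from the letters of `a` and of `H`. -/
lemma x_sub_y (hsym : ∀ p : FreeMonoid Ω × FreeMonoid Ω, p ∈ H → (p.2, p.1) ∈ H)
    (a : FreeMonoid Ω) (N : ℕ) {A : Set Ω}
    (hAa : ∀ c ∈ toList a, c ∈ A)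
    (hAH : ∀ pq ∈ H, (∀ c ∈ toList pq.1, c ∈ A) ∧ (∀ c ∈ toList pq.2, c ∈ A)) :
    ∀ n : ℕ, ∀ u v : FreeMonoid Ω, u.length + v.length = n →
      u.length + v.length ≤ 3 * N → Rho H (a * u) (a * v) →
      (u, v) ∈ rcGen {p : FreeMonoid Ω × FreeMonoid Ω |
        (p.1.length + p.2.length ≤ 3 * N ∧ Rho H (a * p.1) (a * p.2)) ∧
        (∀ c ∈ toList p.1, c ∈ A) ∧ (∀ c ∈ toList p.2, c ∈ A)} := by
  classical
  set Y : Set (FreeMonoid Ω × FreeMonoid Ω) :=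
    {p | (p.1.length + p.2.length ≤ 3 * N ∧ Rho H (a * p.1) (a * p.2)) ∧
      (∀ c ∈ toList p.1, c ∈ A) ∧ (∀ c ∈ toList p.2, c ∈ A)} with hYdef
  have cY := isRightCong_rcGen Y
  intro n
  induction n using Nat.strong_induction_on with
  | _ n IH =>
  have key : ∀ u v : FreeMonoid Ω, u.length + v.length = n →
      u.length + v.length ≤ 3 * N → Rho H (a * u) (a * v) →
      (∃ c ∈ toList u, c ∉ A) → (u, v) ∈ rcGen Y := by
    intro u v hn h3 hr hbad
    obtain ⟨l₁, c, l₂, hl, hl₁, hc⟩ := first_bad A (toList u) hbad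
    set s : FreeMonoid Ω := ofList (c :: l₂) with hs
    have hu : u = ofList l₁ * s := by
      apply toList.injective
      rw [hl, hs, toList_mul, toList_ofList, toList_ofList]
    have hdecomp : a * u = (a * ofList l₁) * s := by rw [hu, mul_assoc]
    have hyA : ∀ x ∈ toList (a * ofList l₁), x ∈ A := by
      intro x hx
      rw [toList_mul] at hx
      rcases List.mem_append.1 hx with hx | hx
      · exact hAa x hx
      · exact hl₁ x (by simpa using hx)
    have hheadbad : ∀ hd tl, toList s = hd :: tl → hd ∉ A := by
      intro hd tl hh
      have : c = hd := by
        rw [hs, toList_ofList] at hh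
        exact (List.cons.injEq _ _ _ _ ▸ hh).1
      exact this ▸ hc
    obtain ⟨z, hz1, hz2, hz3⟩ := fresh hAH hr _ _ hdecomp hyA hheadbad
    have hs1 : s.length = l₂.length + 1 := by
      rw [hs]
      show (c :: l₂).length = l₂.length + 1
      simp
    have hsv : s.length ≤ v.length := by
      by_contra hlt
      push_neg at hlt
      obtain ⟨d, hd1, hd2⟩ := split_agree (hz1 : a * v = z * s) hlt.le
      have hdne : toList d ≠ [] := by
        intro hnil
        have : d.length = 0 := congrArg List.length hnil
        have h1 := congrArg FreeMonoid.length hd1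
        simp only [length_mul] at h1
        omega
      obtain ⟨hd, tl, hdt⟩ := List.exists_cons_of_ne_nil hdne
      have hsl : toList s = hd :: (tl ++ toList v) := by
        rw [hd1, toList_mul, hdt]; rfl
      have hchd : c = hd := by
        have : toList s = c :: l₂ := by rw [hs, toList_ofList]
        rw [this] at hsl
        exact (List.cons.injEq _ _ _ _ ▸ hsl).1
      have : hd ∈ toList a := by
        rw [hd2, toList_mul, hdt]
        simp
      exact (hchd ▸ hc) (hAa hd this)
    obtain ⟨v₁, hv₁, hzv₁⟩ := split_agree (hz1.symm : z * s = a * v) hsv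
    have hrv : Rho H (a * ofList l₁) (a * v₁) := by rw [← hzv₁]; exact hz3
    have hul : u.length = l₁.length + s.length := by
      rw [hu, length_mul]; rfl
    have hvl : v.length = v₁.length + s.length := by
      rw [hv₁, length_mul]
    have hmem₁ : (ofList l₁, v₁) ∈ rcGen Y := by
      have hlen : (ofList l₁).length = l₁.length := rfl
      exact IH ((ofList l₁).length + v₁.length) (by omega) _ v₁ rfl (by omega) hrv
    have := cY.2 _ _ s hmem₁
    rw [hu, hv₁]
    exact this
  intro u v hn h3 hr
  by_cases hgood : (∀ c ∈ toList u, c ∈ A) ∧ (∀ c ∈ toList v, c ∈ A)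
  · exact subset_rcGen Y ⟨⟨h3, hr⟩, hgood⟩
  · by_cases hu' : ∀ c ∈ toList u, c ∈ A
    · have hbadv : ∃ c ∈ toList v, c ∉ A := by
        by_contra hvv
        push_neg at hvv
        exact hgood ⟨hu', hvv⟩
      exact cY.1.symm (key v u (by omega) (by omega) (rho_symm hsym hr) hbadv)
    · push_neg at hu'
      exact key u v hn h3 hr hu'

end Anni

open Anni FreeMonoid

/-- Let `H ⊆ Ω* × Ω*` be finite and symmetric, `ρ = ⟨H⟩`, `a ∈ Ω*`, and set
`K = max { |p| : (p,q) ∈ H }`, `K' = max(K, |a|) + 1`, `L = 2|H| + 2`,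
`N = K'·L`.  Then the right annihilator congruence
`r(aρ) = {(u,v) : (au, av) ∈ ρ}` is generated, as a right congruence on `Ω*`,
by the set `X = {(u,v) : |u| + |v| ≤ 3N and (au, av) ∈ ρ}`.  In particular,
`r(aρ)` is a finitely generated right congruence. -/
theorem annihilator_finitely_generated (Ω : Type*)
    (H : Set (FreeMonoid Ω × FreeMonoid Ω)) (hfin : H.Finite)
    (hsym : ∀ p : FreeMonoid Ω × FreeMonoid Ω, p ∈ H → (p.2, p.1) ∈ H)
    (a : FreeMonoid Ω) (K K' L N : ℕ)
    (hK : K = sSup ((fun p : FreeMonoid Ω × FreeMonoid Ω => p.1.length) '' H))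
    (hK' : K' = max K a.length + 1)
    (hL : L = 2 * H.ncard + 2)
    (hN : N = K' * L) :
    rcGen {p : FreeMonoid Ω × FreeMonoid Ω |
        p.1.length + p.2.length ≤ 3 * N ∧ (a * p.1, a * p.2) ∈ rcGen H} =
      {p : FreeMonoid Ω × FreeMonoid Ω | (a * p.1, a * p.2) ∈ rcGen H} ∧
    ∃ Y : Set (FreeMonoid Ω × FreeMonoid Ω), Y.Finite ∧
      rcGen Y = {p : FreeMonoid Ω × FreeMonoid Ω | (a * p.1, a * p.2) ∈ rcGen H} := by
  classical
  have hKb : ∀ p q : FreeMonoid Ω, (p, q) ∈ H → p.length ≤ K := by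
    intro p q hpq
    rw [hK]
    exact le_csSup ((hfin.image _).bddAbove) ⟨(p, q), hpq, rfl⟩
  have hrho := rcGen_eq_rho hsym
  have hXeq : {p : FreeMonoid Ω × FreeMonoid Ω |
      p.1.length + p.2.length ≤ 3 * N ∧ (a * p.1, a * p.2) ∈ rcGen H}
      = {p : FreeMonoid Ω × FreeMonoid Ω |
        p.1.length + p.2.length ≤ 3 * N ∧ Rho H (a * p.1) (a * p.2)} := by
    rw [hrho]; rfl
  have hReq : {p : FreeMonoid Ω × FreeMonoid Ω | (a * p.1, a * p.2) ∈ rcGen H}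
      = {p : FreeMonoid Ω × FreeMonoid Ω | Rho H (a * p.1) (a * p.2)} := by
    rw [hrho]; rfl
  set X : Set (FreeMonoid Ω × FreeMonoid Ω) :=
    {p | p.1.length + p.2.length ≤ 3 * N ∧ Rho H (a * p.1) (a * p.2)} with hXdef
  set R : Set (FreeMonoid Ω × FreeMonoid Ω) :=
    {p | Rho H (a * p.1) (a * p.2)} with hRdef
  have cR : IsRightCong R := by
    constructor
    · refine ⟨fun x => Relation.ReflTransGen.refl, fun h => rho_symm hsym h,
        fun h1 h2 => h1.trans h2⟩
    · intro u v t h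
      show Rho H (a * (u * t)) (a * (v * t))
      rw [← mul_assoc, ← mul_assoc]
      exact Rho.mulRight h
  have h1 : rcGen X ⊆ R := rcGen_subset cR (fun p hp => hp.2)
  have h2 : R ⊆ rcGen X := by
    rintro ⟨u, v⟩ hp
    exact generated hsym hfin a hKb hK' hL hN (u.length + v.length) u v rfl hp
  constructor
  · rw [hXeq, hReq]
    exact subset_antisymm h1 h2
  · set A : Set Ω := {c | c ∈ toList a} ∪
      ⋃ pq ∈ H, ({c | c ∈ toList pq.1} ∪ {c | c ∈ toList pq.2}) with hAdef
    have hAfin : A.Finite :=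
      (List.finite_toSet _).union (hfin.biUnion fun pq _ =>
        (List.finite_toSet _).union (List.finite_toSet _))
    have hAa : ∀ c ∈ toList a, c ∈ A := fun c hc => Or.inl hc
    have hAH : ∀ pq ∈ H, (∀ c ∈ toList pq.1, c ∈ A) ∧ (∀ c ∈ toList pq.2, c ∈ A) := by
      intro pq hpq
      constructor
      · intro c hc
        exact Or.inr (Set.mem_biUnion hpq (Or.inl hc))
      · intro c hc
        exact Or.inr (Set.mem_biUnion hpq (Or.inr hc))
    set Y : Set (FreeMonoid Ω × FreeMonoid Ω) :=
      {p | (p.1.length + p.2.length ≤ 3 * N ∧ Rho H (a * p.1) (a * p.2)) ∧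
        (∀ c ∈ toList p.1, c ∈ A) ∧ (∀ c ∈ toList p.2, c ∈ A)} with hYdef
    refine ⟨Y, ?_, ?_⟩
    · -- finiteness of Y
      haveI : Finite ↑A := hAfin.to_subtype
      set W : Set (FreeMonoid Ω) := {w | w.length ≤ 3 * N ∧ ∀ c ∈ toList w, c ∈ A} with hWdef
      have hW : W.Finite := by
        have himg : W ⊆ (fun l : List ↑A => ofList (l.map Subtype.val)) ''
            {l : List ↑A | l.length ≤ 3 * N} := by
          intro w hw
          refine ⟨(toList w).attach.map (fun x => (⟨x.1, hw.2 x.1 x.2⟩ : ↑A)), ?_, ?_⟩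
          · show (List.map _ _).length ≤ 3 * N
            rw [List.length_map, List.length_attach]
            exact hw.1
          · show ofList _ = w
            rw [List.map_map]
            have : (Subtype.val ∘ fun x : {x // x ∈ toList w} => (⟨x.1, hw.2 x.1 x.2⟩ : ↑A))
                = Subtype.val := rfl
            rw [this, List.attach_map_subtype_val, ofList_toList]
        exact ((List.finite_length_le ↑A (3 * N)).image _).subset himg
      have hYsub : Y ⊆ W ×ˢ W := by
        rintro ⟨u, v⟩ ⟨⟨hlen, -⟩, hu, hv⟩
        exact ⟨⟨by omega, hu⟩, ⟨by omega, hv⟩⟩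
      exact ((hW.prod hW).subset hYsub)
    · rw [hReq]
      apply subset_antisymm
      · exact rcGen_subset cR (fun p hp => hp.1.2)
      · intro p hp
        have hXY : X ⊆ rcGen Y := by
          rintro ⟨u, v⟩ hq
          exact x_sub_y hsym a N hAa hAH (u.length + v.length) u v rfl hq.1 hq.2
        exact rcGen_subset (isRightCong_rcGen Y) hXY (h2 hp)
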